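/- Let f be a form of degree 2d in ℝ[X_1,...,X_n] with Δ defined as the set of exponents α ≠ 2d·e_i with f_α X^α not a square. If min_{1≤i≤n} f_{2d,i} ≥ (1/2d)·Σ_{α∈Δ} |f_α|·(α^α)^{1/(2d)}, then f is a sum of squares. -/

import Mathlib

open MvPolynomial

open Finset

section basic
variable {R : Type*} [CommRing R]

theorem isSumSq_sq (a : R) : IsSumSq (a * a) := by
  simpa using IsSumSq.sq_add a 0 IsSumSq.zero

theorem IsSumSq.sq_mul {b : R} (hb : IsSumSq b) (c : R) : IsSumSq (c * c * b) := by
  induction hb with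
  | zero => simpa using IsSumSq.zero
  | @sq_add a S hS ih =>
      have : c * c * (a * a + S) = (c * a) * (c * a) + c * c * S := by ring
      rw [this]; exact IsSumSq.sq_add _ ih

theorem IsSumSq.mul' {a b : R} (ha : IsSumSq a) (hb : IsSumSq b) : IsSumSq (a * b) := by
  induction ha with
  | zero => simpa using IsSumSq.zero
  | @sq_add c S hS ih =>
      have : (c * c + S) * b = c * c * b + S * b := by ring
      rw [this]; exact (hb.sq_mul c).add ih

theorem IsSumSq.map {S : Type*} [CommRing S] {a : R} (ha : IsSumSq a) (φ : R →+* S) :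
    IsSumSq (φ a) := by
  induction ha with
  | zero => simpa using IsSumSq.zero
  | @sq_add c T hT ih => rw [map_add, map_mul]; exact IsSumSq.sq_add _ ih

theorem IsSumSq.nsmul' {a : R} (ha : IsSumSq a) (k : ℕ) : IsSumSq ((k : R) * a) := by
  induction k with
  | zero => simpa using IsSumSq.zero
  | succ k ih =>
      push_cast
      have : ((k : R) + 1) * a = (k : R) * a + a := by ring
      rw [this]; exact ih.add ha

end basic

section real
variable {σ : Type*}

/-- nonnegative real constant times SOS polynomial -/
theorem IsSumSq.const_mul {r : ℝ} (hr : 0 ≤ r) {p : MvPolynomial σ ℝ} (hp : IsSumSq p) :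
    IsSumSq (C r * p) := by
  have : C r * p = (C (Real.sqrt r) * C (Real.sqrt r)) * p := by
    rw [← map_mul, Real.mul_self_sqrt hr]
  rw [this]
  exact hp.sq_mul _

end real

/-- Key algebraic identity behind Hurwitz's SOS proof of AM-GM. -/
theorem amgm_identity {R : Type*} [CommRing R] {σ : Type*} [DecidableEq σ]
    (T : Finset σ) (u : σ → R) (k : ℕ) (hm : T.card = k + 1) :
    (2 * k : R) * ((∑ i ∈ T, u i ^ (k+1)) - ((k:R)+1) * ∏ i ∈ T, u i)
      = 2 * (∑ i ∈ T, u i * ((∑ j ∈ T.erase i, u j ^ k) - (k:R) * ∏ j ∈ T.erase i, u j))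
        + ∑ i ∈ T, ∑ j ∈ T.erase i, (u i - u j) * (u i ^ k - u j ^ k) := by
  have e1 : ∑ i ∈ T, u i * ((∑ j ∈ T.erase i, u j ^ k) - (k:R) * ∏ j ∈ T.erase i, u j)
      = (∑ i ∈ T, u i) * (∑ j ∈ T, u j ^ k) - (∑ i ∈ T, u i ^ (k+1))
        - (k : R) * ((k:R)+1) * ∏ i ∈ T, u i := by
    have step : ∀ i ∈ T, u i * ((∑ j ∈ T.erase i, u j ^ k) - (k:R) * ∏ j ∈ T.erase i, u j)
        = u i * (∑ j ∈ T, u j ^ k) - u i ^ (k+1) - (k:R) * ∏ j ∈ T, u j := by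
      intro i hi
      rw [Finset.sum_erase_eq_sub hi]
      have : u i * ((k:R) * ∏ j ∈ T.erase i, u j) = (k:R) * (u i * ∏ j ∈ T.erase i, u j) := by ring
      rw [mul_sub, this, Finset.mul_prod_erase T u hi]
      ring
    rw [Finset.sum_congr rfl step]
    rw [Finset.sum_sub_distrib, Finset.sum_sub_distrib, ← Finset.sum_mul,
      Finset.sum_const, hm, nsmul_eq_mul]
    push_cast
    ring
  have e2 : ∑ i ∈ T, ∑ j ∈ T.erase i, (u i - u j) * (u i ^ k - u j ^ k)
      = 2 * (((k:R)+1) * ∑ i ∈ T, u i ^ (k+1)) - 2 * ((∑ i ∈ T, u i) * (∑ j ∈ T, u j ^ k)) := by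
    have step : ∀ i ∈ T, ∑ j ∈ T.erase i, (u i - u j) * (u i ^ k - u j ^ k)
        = ∑ j ∈ T, (u i - u j) * (u i ^ k - u j ^ k) := by
      intro i hi
      rw [Finset.sum_erase_eq_sub hi]
      simp
    rw [Finset.sum_congr rfl step]
    have expand : ∀ i ∈ T, ∑ j ∈ T, (u i - u j) * (u i ^ k - u j ^ k)
        = (((k:R)+1) * u i ^ (k+1)) + (∑ j ∈ T, u j ^ (k+1))
          - u i * (∑ j ∈ T, u j ^ k) - (∑ j ∈ T, u j) * u i ^ k := by
      intro i hi
      have pointwise : ∀ j ∈ T, (u i - u j) * (u i ^ k - u j ^ k)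
          = (u i ^ (k+1) + u j ^ (k+1)) - (u i * u j ^ k + u j * u i ^ k) := by
        intro j hj; ring
      rw [Finset.sum_congr rfl pointwise, Finset.sum_sub_distrib,
        Finset.sum_add_distrib, Finset.sum_add_distrib, Finset.sum_const, hm,
        nsmul_eq_mul, ← Finset.mul_sum, ← Finset.sum_mul]
      push_cast
      ring
    rw [Finset.sum_congr rfl expand]
    rw [Finset.sum_sub_distrib, Finset.sum_sub_distrib, Finset.sum_add_distrib,
      ← Finset.mul_sum, Finset.sum_const, hm, nsmul_eq_mul, ← Finset.sum_mul,
      ← Finset.mul_sum]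
    push_cast
    ring
  rw [e1, e2]
  push_cast
  ring

/-- symmetric Hurwitz AM-GM SOS lemma -/
theorem amgm_sym {σ : Type*} [DecidableEq σ] (T : Finset σ) :
    IsSumSq ((∑ i ∈ T, ((X i : MvPolynomial σ ℝ) ^ 2) ^ T.card)
      - (T.card : MvPolynomial σ ℝ) * ∏ i ∈ T, (X i) ^ 2) := by
  induction T using Finset.strongInduction with
  | _ T ih =>
    match hc : T.card with
    | 0 =>
        rw [Finset.card_eq_zero] at hc
        subst hc
        simpa using IsSumSq.zero
    | 1 =>
        rw [Finset.card_eq_one] at hc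
        obtain ⟨a, rfl⟩ := hc
        simpa using IsSumSq.zero
    | (k+1) + 1 =>
        set m := k + 1 with hk
        have hne : ((2 * m : ℕ) : ℝ) ≠ 0 := by positivity
        have idt := amgm_identity T (fun i => (X i : MvPolynomial σ ℝ) ^ 2) m hc
        have cast1 : ((2 * m : ℕ) : MvPolynomial σ ℝ) = C ((2 * m : ℕ) : ℝ) :=
          (map_natCast (C : ℝ →+* MvPolynomial σ ℝ) (2 * m)).symm
        have c2 : (2 * (m : MvPolynomial σ ℝ)) = C ((2 * m : ℕ) : ℝ) := by
          rw [← cast1]; push_cast; ring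
        have hE : (∑ i ∈ T, ((X i : MvPolynomial σ ℝ) ^ 2) ^ (m+1))
              - ((m+1 : ℕ) : MvPolynomial σ ℝ) * ∏ i ∈ T, (X i) ^ 2
            = C (((2 * m : ℕ) : ℝ)⁻¹) *
              (2 * (∑ i ∈ T, (X i)^2 * ((∑ j ∈ T.erase i, ((X j)^2) ^ m)
                  - (m : MvPolynomial σ ℝ) * ∏ j ∈ T.erase i, (X j)^2))
               + ∑ i ∈ T, ∑ j ∈ T.erase i,
                  ((X i)^2 - (X j)^2) * (((X i)^2) ^ m - ((X j)^2) ^ m)) := by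
          rw [← idt, c2, ← mul_assoc, ← map_mul, inv_mul_cancel₀ hne, map_one, one_mul]
          push_cast
          ring
        rw [hE]
        apply IsSumSq.const_mul (by positivity)
        apply IsSumSq.add
        · have : (2 : MvPolynomial σ ℝ) * (∑ i ∈ T, (X i)^2 * ((∑ j ∈ T.erase i, ((X j)^2) ^ m)
                  - (m : MvPolynomial σ ℝ) * ∏ j ∈ T.erase i, (X j)^2))
              = (∑ i ∈ T, (X i)^2 * ((∑ j ∈ T.erase i, ((X j)^2) ^ m)
                  - (m : MvPolynomial σ ℝ) * ∏ j ∈ T.erase i, (X j)^2))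
              + (∑ i ∈ T, (X i)^2 * ((∑ j ∈ T.erase i, ((X j)^2) ^ m)
                  - (m : MvPolynomial σ ℝ) * ∏ j ∈ T.erase i, (X j)^2)) := by ring
          rw [this]
          have hsos : IsSumSq (∑ i ∈ T, (X i : MvPolynomial σ ℝ)^2 *
              ((∑ j ∈ T.erase i, ((X j)^2) ^ m)
                - (m : MvPolynomial σ ℝ) * ∏ j ∈ T.erase i, (X j)^2)) := by
            apply IsSumSq.sum
            intro i hi
            have hcard : (T.erase i).card = m := by
              rw [Finset.card_erase_of_mem hi, hc]; omega
            have hrec := ih (T.erase i) (Finset.erase_ssubset hi)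
            rw [hcard] at hrec
            have hm' : ((m : ℕ) : MvPolynomial σ ℝ) = (m : MvPolynomial σ ℝ) := by push_cast; ring
            rw [hm'] at hrec
            have : (X i : MvPolynomial σ ℝ)^2 * ((∑ j ∈ T.erase i, ((X j)^2) ^ m)
                  - (m : MvPolynomial σ ℝ) * ∏ j ∈ T.erase i, (X j)^2)
                = X i * X i * ((∑ j ∈ T.erase i, ((X j)^2) ^ m)
                  - (m : MvPolynomial σ ℝ) * ∏ j ∈ T.erase i, (X j)^2) := by ring
            rw [this]
            exact hrec.sq_mul (X i)
          exact hsos.add hsos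
        · apply IsSumSq.sum
          intro i hi
          apply IsSumSq.sum
          intro j hj
          have hgeom : ((X i : MvPolynomial σ ℝ)^2 - (X j)^2) * (((X i)^2) ^ m - ((X j)^2) ^ m)
              = (((X i)^2 - (X j)^2) * ((X i)^2 - (X j)^2)) *
                (∑ s ∈ Finset.range m, ((X i)^2) ^ s * ((X j)^2) ^ (m - 1 - s)) := by
            rw [show (((X i : MvPolynomial σ ℝ)^2) ^ m - ((X j)^2) ^ m)
                = (∑ s ∈ Finset.range m, ((X i)^2) ^ s * ((X j)^2) ^ (m - 1 - s)) *
                  ((X i)^2 - (X j)^2) from (geom_sum₂_mul _ _ m).symm]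
            ring
          rw [hgeom]
          apply IsSumSq.mul' (isSumSq_sq _)
          apply IsSumSq.sum
          intro s hs
          have : ((X i : MvPolynomial σ ℝ)^2) ^ s * ((X j)^2) ^ (m - 1 - s)
              = (X i ^ s * X j ^ (m-1-s)) * (X i ^ s * X j ^ (m-1-s)) := by ring
          rw [this]
          exact isSumSq_sq _

/-- weighted AM-GM SOS lemma -/
theorem amgm_weighted {n : ℕ} (b : Fin n → ℕ) (m : ℕ) (hm : ∑ i, b i = m) :
    IsSumSq ((∑ i, ((b i : ℕ) : MvPolynomial (Fin n) ℝ) * X i ^ (2*m))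
      - (m : MvPolynomial (Fin n) ℝ) * ∏ i, X i ^ (2 * b i)) := by
  classical
  set T : Finset ((_ : Fin n) × ℕ) :=
    (Finset.univ : Finset (Fin n)).sigma (fun i => Finset.range (b i)) with hT
  have hcard : T.card = m := by
    rw [hT, Finset.card_sigma]
    simpa using hm
  have h0 := amgm_sym T
  rw [hcard] at h0
  have h1 := h0.map (aeval (fun p : (_ : Fin n) × ℕ => (X p.1 : MvPolynomial (Fin n) ℝ))).toRingHom
  have heq : (aeval (fun p : (_ : Fin n) × ℕ => (X p.1 : MvPolynomial (Fin n) ℝ))).toRingHom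
        ((∑ i ∈ T, ((X i : MvPolynomial ((_ : Fin n) × ℕ) ℝ) ^ 2) ^ m)
          - (m : MvPolynomial ((_ : Fin n) × ℕ) ℝ) * ∏ i ∈ T, (X i) ^ 2)
      = (∑ i, ((b i : ℕ) : MvPolynomial (Fin n) ℝ) * X i ^ (2*m))
          - (m : MvPolynomial (Fin n) ℝ) * ∏ i, X i ^ (2 * b i) := by
    rw [AlgHom.toRingHom_eq_coe, RingHom.coe_coe, map_sub, map_mul, map_sum, map_prod, map_natCast]
    congr 1
    · simp only [map_pow, aeval_X]
      rw [hT, Finset.sum_sigma]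
      apply Finset.sum_congr rfl
      intro i _
      simp only [Finset.sum_const, Finset.card_range, nsmul_eq_mul]
      rw [← pow_mul]
    · congr 1
      simp only [map_pow, aeval_X]
      rw [hT, Finset.prod_sigma]
      apply Finset.prod_congr rfl
      intro i _
      simp only []
      rw [Finset.prod_const, Finset.card_range, ← pow_mul]
  rw [heq] at h1
  exact h1

theorem exists_split {n : ℕ} (a : Fin n → ℕ) :
    ∀ e, e ≤ ∑ i, a i → ∃ h : Fin n → ℕ, (∀ i, h i ≤ a i) ∧ ∑ i, h i = e := by
  intro e
  induction e with
  | zero => exact fun _ => ⟨0, by simp, by simp⟩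
  | succ e ih =>
      intro he
      obtain ⟨h, hle, hsum⟩ := ih (le_trans (Nat.le_succ e) he)
      have hex : ∃ i, h i < a i := by
        by_contra hc
        push_neg at hc
        have h1 : ∑ i, a i ≤ ∑ i, h i := Finset.sum_le_sum (fun i _ => hc i)
        omega
      obtain ⟨i, hi⟩ := hex
      refine ⟨Function.update h i (h i + 1), ?_, ?_⟩
      · intro j
        by_cases hj : j = i
        · subst hj; rw [Function.update_self]; omega
        · rw [Function.update_of_ne hj]; exact hle j
      · rw [Finset.sum_update_of_mem (Finset.mem_univ i)]
        have h2 := Finset.sum_eq_add_sum_sdiff_singleton_of_mem (Finset.mem_univ i) h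
        omega

theorem key_sos {n d : ℕ} (hd : 1 ≤ d) (a : Fin n → ℕ) (ha : ∑ i, a i = 2*d)
    (ε : ℝ) (hε : ε = 1 ∨ ε = -1) :
    IsSumSq ((∑ i, ((a i : ℕ) : MvPolynomial (Fin n) ℝ) * X i ^ (2*d))
      + C (ε * ((2*d : ℕ) : ℝ)) * ∏ i, X i ^ a i) := by
  obtain ⟨h, hle, hsum⟩ := exists_split a d (by omega)
  set k : Fin n → ℕ := fun i => a i - h i with hkdef
  have hk : ∀ i, h i + k i = a i := fun i => by have := hle i; simp only [hkdef]; omega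
  have hks : ∑ i, k i = d := by
    have : (∑ i, h i) + (∑ i, k i) = ∑ i, a i := by
      rw [← Finset.sum_add_distrib]
      exact Finset.sum_congr rfl (fun i _ => hk i)
    omega
  have Gh := amgm_weighted h d hsum
  have Gk := amgm_weighted k d hks
  set P : MvPolynomial (Fin n) ℝ := ∏ i, X i ^ h i with hP
  set Q : MvPolynomial (Fin n) ℝ := ∏ i, X i ^ k i with hQ
  have hP2 : (∏ i, (X i : MvPolynomial (Fin n) ℝ) ^ (2 * h i)) = P * P := by
    rw [hP, ← Finset.prod_mul_distrib]
    exact Finset.prod_congr rfl (fun i _ => by rw [← pow_add]; congr 1; omega)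
  have hQ2 : (∏ i, (X i : MvPolynomial (Fin n) ℝ) ^ (2 * k i)) = Q * Q := by
    rw [hQ, ← Finset.prod_mul_distrib]
    exact Finset.prod_congr rfl (fun i _ => by rw [← pow_add]; congr 1; omega)
  have hPQ : (∏ i, (X i : MvPolynomial (Fin n) ℝ) ^ a i) = P * Q := by
    rw [hP, hQ, ← Finset.prod_mul_distrib]
    exact Finset.prod_congr rfl (fun i _ => by rw [← pow_add, hk i])
  have hε2 : (C ε : MvPolynomial (Fin n) ℝ) * C ε = 1 := by
    rw [← map_mul]
    rcases hε with h1 | h1 <;> rw [h1] <;> norm_num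
  have hsq : IsSumSq ((d : MvPolynomial (Fin n) ℝ) *
      ((P + C ε * Q) * (P + C ε * Q))) := (isSumSq_sq _).nsmul' d
  have main : (∑ i, ((a i : ℕ) : MvPolynomial (Fin n) ℝ) * X i ^ (2*d))
        + C (ε * ((2*d : ℕ) : ℝ)) * ∏ i, X i ^ a i
      = ((∑ i, ((h i : ℕ) : MvPolynomial (Fin n) ℝ) * X i ^ (2*d))
          - (d : MvPolynomial (Fin n) ℝ) * ∏ i, X i ^ (2 * h i))
        + ((∑ i, ((k i : ℕ) : MvPolynomial (Fin n) ℝ) * X i ^ (2*d))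
          - (d : MvPolynomial (Fin n) ℝ) * ∏ i, X i ^ (2 * k i))
        + (d : MvPolynomial (Fin n) ℝ) * ((P + C ε * Q) * (P + C ε * Q)) := by
    rw [hP2, hQ2, hPQ]
    have hsplit : (∑ i, ((a i : ℕ) : MvPolynomial (Fin n) ℝ) * X i ^ (2*d))
        = (∑ i, ((h i : ℕ) : MvPolynomial (Fin n) ℝ) * X i ^ (2*d))
          + (∑ i, ((k i : ℕ) : MvPolynomial (Fin n) ℝ) * X i ^ (2*d)) := by
      rw [← Finset.sum_add_distrib]
      apply Finset.sum_congr rfl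
      intro i _
      rw [← add_mul]
      congr 1
      rw [← Nat.cast_add, hk i]
    rw [hsplit]
    rw [show (C (ε * ((2*d : ℕ) : ℝ)) : MvPolynomial (Fin n) ℝ)
        = C ε * ((2*d : ℕ) : MvPolynomial (Fin n) ℝ) by rw [map_mul, map_natCast]]
    push_cast
    linear_combination (-(d : MvPolynomial (Fin n) ℝ) * Q * Q) * hε2
  rw [main]
  exact (Gh.add Gk).add hsq

theorem scaled_key {n d : ℕ} (hd : 1 ≤ d) (a : Fin n → ℕ) (ha : ∑ i, a i = 2*d)
    (e : ℝ) (he : e ≠ 0) :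
    IsSumSq ((∑ i : Fin n, C (|e| * (∏ j, ((a j : ℕ) : ℝ) ^ (a j)) ^ (1 / ((2*d:ℕ):ℝ))
        / ((2*d:ℕ):ℝ)) * X i ^ (2*d))
      + C e * ∏ i, X i ^ a i) := by
  have hd0 : (2*d : ℕ) ≠ 0 := by omega
  have hd2 : (0:ℝ) < ((2*d:ℕ):ℝ) := by
    have : (0:ℕ) < 2*d := by omega
    exact_mod_cast this
  have hbase : (0:ℝ) < ∏ j, ((a j : ℕ) : ℝ) ^ (a j) := by
    apply Finset.prod_pos
    intro j _
    rcases Nat.eq_zero_or_pos (a j) with h0 | h0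
    · rw [h0]; norm_num
    · apply pow_pos; exact_mod_cast h0
  set Λ : ℝ := (∏ j, ((a j : ℕ) : ℝ) ^ (a j)) ^ (1 / ((2*d:ℕ):ℝ)) with hLdef
  have hΛpos : 0 < Λ := Real.rpow_pos_of_pos hbase _
  have hΛpow : Λ ^ (2*d) = ∏ j, ((a j : ℕ) : ℝ) ^ (a j) := by
    rw [hLdef, one_div]
    exact Real.rpow_inv_natCast_pow hbase.le hd0
  set t : Fin n → ℝ := fun i => if a i = 0 then 1 else (Λ / ((a i : ℕ):ℝ)) ^ (((2*d:ℕ):ℝ))⁻¹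
    with htdef
  have htpos : ∀ i, 0 < t i := by
    intro i
    rw [htdef]
    dsimp only
    split
    · norm_num
    next h0 =>
      apply Real.rpow_pos_of_pos
      apply div_pos hΛpos
      have : 0 < a i := Nat.pos_of_ne_zero h0
      exact_mod_cast this
  have htpow : ∀ i, a i ≠ 0 → t i ^ (2*d) = Λ / ((a i : ℕ):ℝ) := by
    intro i h0
    rw [htdef]
    dsimp only
    rw [if_neg h0]
    apply Real.rpow_inv_natCast_pow _ hd0
    apply (div_pos hΛpos _).le
    have : 0 < a i := Nat.pos_of_ne_zero h0
    exact_mod_cast this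
  have htprodpow : (∏ i, t i ^ a i) ^ (2*d) = 1 := by
    rw [← Finset.prod_pow]
    have hstep : ∀ i ∈ Finset.univ, (t i ^ a i) ^ (2*d) = (Λ / ((a i:ℕ):ℝ)) ^ (a i) := by
      intro i _
      rcases Nat.eq_zero_or_pos (a i) with h0 | h0
      · rw [h0]; simp
      · rw [← pow_mul, mul_comm (a i) (2*d), pow_mul, htpow i (by omega)]
    rw [Finset.prod_congr rfl hstep]
    have : ∀ i ∈ Finset.univ, (Λ / ((a i:ℕ):ℝ)) ^ (a i)
        = Λ ^ (a i) / ((a i:ℕ):ℝ) ^ (a i) := fun i _ => div_pow _ _ _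
    rw [Finset.prod_congr rfl this, Finset.prod_div_distrib, Finset.prod_pow_eq_pow_sum, ha,
      hΛpow, div_self hbase.ne']
  have htprod : (∏ i, t i ^ a i) = 1 := by
    have hpos : 0 < ∏ i, t i ^ a i := Finset.prod_pos (fun i _ => pow_pos (htpos i) _)
    calc (∏ i, t i ^ a i)
        = ((∏ i, t i ^ a i) ^ (2*d)) ^ (((2*d:ℕ):ℝ))⁻¹ :=
          (Real.pow_rpow_inv_natCast hpos.le hd0).symm
      _ = 1 := by rw [htprodpow, Real.one_rpow]
  -- the sign
  set ε : ℝ := e / |e| with hεdef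
  have habs : 0 < |e| := abs_pos.mpr he
  have hε : ε = 1 ∨ ε = -1 := by
    rcases lt_or_gt_of_ne he with h0 | h0
    · right
      rw [hεdef, abs_of_neg h0]
      field_simp
    · left
      rw [hεdef, abs_of_pos h0]
      field_simp
  have hεe : |e| * ε = e := by
    rw [hεdef]
    field_simp
  -- substituted Hurwitz form
  have h1 := (key_sos hd a ha ε hε).map
    (aeval (fun i : Fin n => C (t i) * X i : Fin n → MvPolynomial (Fin n) ℝ)).toRingHom
  have hψ : (aeval (fun i : Fin n => C (t i) * X i : Fin n → MvPolynomial (Fin n) ℝ)).toRingHom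
        ((∑ i, ((a i : ℕ) : MvPolynomial (Fin n) ℝ) * X i ^ (2*d))
          + C (ε * ((2*d : ℕ) : ℝ)) * ∏ i, X i ^ a i)
      = (∑ i, C (((a i : ℕ):ℝ) * t i ^ (2*d)) * X i ^ (2*d))
          + C (ε * ((2*d : ℕ) : ℝ)) * ∏ i, X i ^ a i := by
    rw [AlgHom.toRingHom_eq_coe, RingHom.coe_coe, map_add, map_sum, map_mul, map_prod]
    congr 1
    · apply Finset.sum_congr rfl
      intro i _
      rw [map_mul, map_natCast, map_pow, aeval_X, mul_pow, ← C_pow, C_mul, map_natCast]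
      ring
    · rw [show ((aeval (fun i : Fin n => C (t i) * X i : Fin n → MvPolynomial (Fin n) ℝ))
          (C (ε * ((2*d : ℕ) : ℝ)))) = C (ε * ((2*d : ℕ) : ℝ)) from aeval_C _ _]
      congr 1
      have : ∀ i ∈ Finset.univ,
          (aeval (fun i : Fin n => C (t i) * X i : Fin n → MvPolynomial (Fin n) ℝ))
            ((X i : MvPolynomial (Fin n) ℝ) ^ a i) = C (t i ^ a i) * X i ^ a i := by
        intro i _
        rw [map_pow, aeval_X, mul_pow, ← C_pow]
      rw [Finset.prod_congr rfl this, Finset.prod_mul_distrib, ← map_prod, htprod, map_one,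
        one_mul]
  rw [hψ] at h1
  have h2 := h1.const_mul (r := |e| / ((2*d:ℕ):ℝ)) (by positivity)
  -- final assembly
  have hgoal : (∑ i : Fin n, C (|e| * Λ / ((2*d:ℕ):ℝ)) * X i ^ (2*d))
        + C e * ∏ i, X i ^ a i
      = C (|e| / ((2*d:ℕ):ℝ)) *
          ((∑ i, C (((a i : ℕ):ℝ) * t i ^ (2*d)) * X i ^ (2*d))
            + C (ε * ((2*d : ℕ) : ℝ)) * ∏ i, X i ^ a i)
        + ∑ i : Fin n, C (if a i = 0 then |e| * Λ / ((2*d:ℕ):ℝ) else 0) * X i ^ (2*d) := by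
    have hterm2 : C (|e| / ((2*d:ℕ):ℝ)) * (C (ε * ((2*d : ℕ) : ℝ)) * ∏ i, X i ^ a i)
        = (C e : MvPolynomial (Fin n) ℝ) * ∏ i, X i ^ a i := by
      rw [← mul_assoc, ← map_mul]
      congr 2
      have hD : ((2*d:ℕ):ℝ) ≠ 0 := hd2.ne'
      calc |e| / ((2*d:ℕ):ℝ) * (ε * ((2*d:ℕ):ℝ)) = |e| * ε := by field_simp
        _ = e := hεe
    have hterm1 : ∀ i ∈ Finset.univ,
        C (|e| / ((2*d:ℕ):ℝ)) * (C (((a i : ℕ):ℝ) * t i ^ (2*d)) * X i ^ (2*d))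
          + C (if a i = 0 then |e| * Λ / ((2*d:ℕ):ℝ) else 0) * (X i:MvPolynomial (Fin n) ℝ) ^ (2*d)
        = C (|e| * Λ / ((2*d:ℕ):ℝ)) * X i ^ (2*d) := by
      intro i _
      rw [← mul_assoc, ← map_mul, ← add_mul, ← map_add]
      congr 2
      rcases Nat.eq_zero_or_pos (a i) with h0 | h0
      · rw [h0, if_pos rfl]
        norm_num
      · rw [if_neg (by omega), htpow i (by omega)]
        have hai : ((a i : ℕ):ℝ) ≠ 0 := by
          have : 0 < a i := h0
          positivity
        field_simp
        ring
    rw [mul_add, Finset.mul_sum, hterm2, add_right_comm, ← Finset.sum_add_distrib,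
      Finset.sum_congr rfl hterm1]
  rw [hgoal]
  apply h2.add
  apply IsSumSq.sum
  intro i _
  have hpow : (X i : MvPolynomial (Fin n) ℝ) ^ (2*d) = X i ^ d * X i ^ d := by
    rw [← pow_add]; congr 1; omega
  rw [hpow]
  apply IsSumSq.const_mul (by positivity)
  exact isSumSq_sq _

theorem monomial_eq_prod {n : ℕ} (α : Fin n →₀ ℕ) (c : ℝ) :
    (monomial α c : MvPolynomial (Fin n) ℝ) = C c * ∏ i, X i ^ α i := by
  rw [monomial_eq]
  congr 1
  rw [Finsupp.prod_fintype]
  intro i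
  exact pow_zero _

theorem hom_sum_eq {n d : ℕ} {f : MvPolynomial (Fin n) ℝ} (hf : f.IsHomogeneous (2*d))
    {α : Fin n →₀ ℕ} (hα : α ∈ f.support) : ∑ i, α i = 2*d := by
  have h1 := hf (mem_support_iff.mp hα)
  rw [Finsupp.weight_apply] at h1
  simp only [Finsupp.sum, smul_eq_mul, Pi.one_apply, mul_one] at h1
  rw [← h1]
  exact (Finset.sum_subset (Finset.subset_univ _)
    (fun i _ hnot => Finsupp.notMem_support_iff.mp hnot)).symm

/-- Fidalgo–Kovacec SOS criterion: for a form `f` of degree `2d`, if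
`min_i f_{2d,i} ≥ (1/2d)·Σ_{α∈Δ} |f_α|·(α^α)^{1/(2d)}`, then `f` is a
sum of squares.  (Convention `0^0 = 1`.) -/
theorem fk_min_criterion_sos {n d : ℕ} (hd : 1 ≤ d) (f : MvPolynomial (Fin n) ℝ)
    (hf : f.IsHomogeneous (2 * d)) (Δ : Finset (Fin n →₀ ℕ))
    (hΔ : ∀ α, α ∈ Δ ↔ α ∈ f.support ∧ (¬ ∃ i, α = Finsupp.single i (2 * d)) ∧
      (f.coeff α < 0 ∨ ∃ i, Odd (α i)))
    (hmin : ∀ i, (1 / ((2 * d : ℕ) : ℝ)) *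
        ∑ α ∈ Δ, |f.coeff α| * (∏ j, ((α j : ℕ) : ℝ) ^ (α j)) ^ (1 / ((2 * d : ℕ) : ℝ))
      ≤ f.coeff (Finsupp.single i (2 * d))) :
    IsSumSq f := by
  classical
  have hΔsub : Δ ⊆ f.support := fun α hα => ((hΔ α).mp hα).1
  set ν : (Fin n →₀ ℕ) → ℝ := fun α =>
    |f.coeff α| * (∏ j, ((α j : ℕ) : ℝ) ^ (α j)) ^ (1 / ((2*d:ℕ):ℝ)) / ((2*d:ℕ):ℝ) with hν
  set Nt : ℝ := ∑ α ∈ Δ, ν α with hNt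
  set Dg : Finset (Fin n →₀ ℕ) :=
    Finset.univ.image (fun i : Fin n => Finsupp.single i (2*d)) with hDg
  set mid : Finset (Fin n →₀ ℕ) := (f.support \ Δ).filter (fun α => α ∉ Dg) with hmid
  -- main decomposition of f
  have hdecomp : f = (∑ α ∈ Δ, ((∑ i : Fin n, C (ν α) * X i ^ (2*d))
        + C (f.coeff α) * ∏ i, X i ^ α i))
      + (∑ α ∈ mid, monomial α (f.coeff α))
      + (∑ i : Fin n, C (f.coeff (Finsupp.single i (2*d)) - Nt) * X i ^ (2*d)) := by
    have hsum1 : ∑ α ∈ Δ, ((∑ i : Fin n, C (ν α) * X i ^ (2*d))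
          + C (f.coeff α) * ∏ i, X i ^ α i)
        = (∑ i : Fin n, C Nt * X i ^ (2*d)) + ∑ α ∈ Δ, monomial α (f.coeff α) := by
      rw [Finset.sum_add_distrib]
      congr 1
      · rw [Finset.sum_comm]
        apply Finset.sum_congr rfl
        intro i _
        rw [← Finset.sum_mul, ← map_sum]
      · exact Finset.sum_congr rfl (fun α _ => (monomial_eq_prod α _).symm)
    have hsum3 : (∑ i : Fin n, C (f.coeff (Finsupp.single i (2*d)) - Nt) * X i ^ (2*d))
        = (∑ α ∈ Dg, monomial α (f.coeff α)) - ∑ i : Fin n, C Nt * X i ^ (2*d) := by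
      rw [hDg, Finset.sum_image (by
        intro i _ j _ hij
        exact Finsupp.single_left_injective (by omega) hij), ← Finset.sum_sub_distrib]
      apply Finset.sum_congr rfl
      intro i _
      rw [map_sub, sub_mul, monomial_eq_prod]
      have hXp : (∏ j, (X j : MvPolynomial (Fin n) ℝ) ^ (Finsupp.single i (2*d)) j)
          = X i ^ (2*d) := by
        rw [Finset.prod_eq_single i
          (fun j _ hj => by rw [Finsupp.single_eq_of_ne' (Ne.symm hj), pow_zero])
          (fun h => absurd (Finset.mem_univ i) h), Finsupp.single_eq_same]
      rw [hXp]
    have hDgsum : ∑ α ∈ Dg, monomial α (f.coeff α)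
        = ∑ α ∈ (f.support \ Δ).filter (fun α => α ∈ Dg), monomial α (f.coeff α) := by
      symm
      apply Finset.sum_subset (fun α hα => (Finset.mem_filter.mp hα).2)
      intro α hαDg hαnot
      have hcoeff : f.coeff α = 0 := by
        by_contra hc
        have hαsupp : α ∈ f.support := mem_support_iff.mpr hc
        have hαΔ : α ∉ Δ := by
          intro hαΔ
          have h2 := ((hΔ α).mp hαΔ).2.1
          rw [hDg, Finset.mem_image] at hαDg
          obtain ⟨i, _, hi⟩ := hαDg
          exact h2 ⟨i, hi.symm⟩
        exact hαnot (Finset.mem_filter.mpr ⟨Finset.mem_sdiff.mpr ⟨hαsupp, hαΔ⟩, hαDg⟩)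
      rw [hcoeff, map_zero]
    have hf2 : (∑ α ∈ Δ, monomial α (f.coeff α)) + ((∑ α ∈ mid, monomial α (f.coeff α))
          + (∑ α ∈ Dg, monomial α (f.coeff α))) = f := by
      rw [hDgsum, hmid]
      rw [add_comm (∑ α ∈ (f.support \ Δ).filter (fun α => α ∉ Dg), monomial α (f.coeff α))]
      rw [Finset.sum_filter_add_sum_filter_not (f.support \ Δ) (fun α => α ∈ Dg)]
      rw [add_comm, Finset.sum_sdiff hΔsub]
      exact f.support_sum_monomial_coeff
    rw [hsum1, hsum3]
    linear_combination -hf2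
  rw [hdecomp]
  apply IsSumSq.add
  apply IsSumSq.add
  · -- terms from Δ
    apply IsSumSq.sum
    intro α hα
    have hαsupp := hΔsub hα
    have hsum := hom_sum_eq hf hαsupp
    have hcoeff : f.coeff α ≠ 0 := mem_support_iff.mp hαsupp
    exact scaled_key hd (fun i => α i) hsum (f.coeff α) hcoeff
  · -- middle terms: squares
    apply IsSumSq.sum
    intro α hα
    rw [hmid, Finset.mem_filter, Finset.mem_sdiff] at hα
    obtain ⟨⟨hαsupp, hαΔ⟩, hαDg⟩ := hα
    have hnotsingle : ¬ ∃ i, α = Finsupp.single i (2*d) := by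
      rintro ⟨i, rfl⟩
      exact hαDg (by rw [hDg]; exact Finset.mem_image.mpr ⟨i, Finset.mem_univ i, rfl⟩)
    have hprop : ¬ (f.coeff α < 0 ∨ ∃ i, Odd (α i)) := by
      intro hcon
      exact hαΔ ((hΔ α).mpr ⟨hαsupp, hnotsingle, hcon⟩)
    push_neg at hprop
    obtain ⟨hnonneg, hodd⟩ := hprop
    have heven : ∀ i, Even (α i) := fun i => Nat.not_odd_iff_even.mp (hodd i)
    have hsq : (monomial α (f.coeff α) : MvPolynomial (Fin n) ℝ)
        = (C (Real.sqrt (f.coeff α)) * ∏ i, X i ^ (α i / 2)) *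
          (C (Real.sqrt (f.coeff α)) * ∏ i, X i ^ (α i / 2)) := by
      rw [monomial_eq_prod, mul_mul_mul_comm, ← map_mul,
        Real.mul_self_sqrt hnonneg, ← Finset.prod_mul_distrib]
      congr 1
      apply Finset.prod_congr rfl
      intro i _
      rw [← pow_add]
      congr 1
      obtain ⟨k, hk⟩ := heven i
      omega
    rw [hsq]
    exact isSumSq_sq _
  · -- diagonal terms
    apply IsSumSq.sum
    intro i _
    have hle : Nt ≤ f.coeff (Finsupp.single i (2*d)) := by
      have h1 := hmin i
      have h2 : Nt = (1 / ((2 * d : ℕ) : ℝ)) *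
          ∑ α ∈ Δ, |f.coeff α| * (∏ j, ((α j : ℕ) : ℝ) ^ (α j)) ^ (1 / ((2 * d : ℕ) : ℝ)) := by
        rw [hNt, Finset.mul_sum]
        exact Finset.sum_congr rfl (fun α _ => by rw [hν]; ring)
      rw [h2]
      exact h1
    have hpow : (X i : MvPolynomial (Fin n) ℝ) ^ (2*d) = X i ^ d * X i ^ d := by
      rw [← pow_add]
      congr 1
      omega
    rw [hpow]
    exact IsSumSq.const_mul (by linarith) (isSumSq_sq _)
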